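/- Let u be a fixed-point-free involution and r = (i,j) a transposition with i < j, u(i) = a, u(j) = b, a < b, b ≠ i (so u ⋆ r ≺ u, decreasing conjugation). If t = (i,b), then (t⁻¹ u t)(i) = j; consequently u ⋆ (t r) = u ⋆ t. Similarly if t = (j,a) then (t⁻¹ u t)(i) = j and u ⋆ (t r) = u ⋆ t. -/
import Mathlib


open Equiv

/-- A fixed-point-free involution of `Fin m`. -/
def IsFpfInvolution {m : ℕ} (u : Equiv.Perm (Fin m)) : Prop :=
  u * u = 1 ∧ ∀ i, u i ≠ i

/-- The number of inversions of a permutation (its Coxeter length). -/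
def invCount {m : ℕ} (u : Equiv.Perm (Fin m)) : ℕ :=
  (Finset.univ.filter (fun p : Fin m × Fin m => p.1 < p.2 ∧ u p.2 < u p.1)).card

/-- One step in the Bruhat order: right multiplication by a transposition
which increases the length. -/
def BruhatStep {m : ℕ} (x y : Equiv.Perm (Fin m)) : Prop :=
  (∃ a b : Fin m, a ≠ b ∧ y = x * Equiv.swap a b) ∧ invCount x < invCount y

/-- The Bruhat order on the symmetric group. -/
def BruhatLE {m : ℕ} (x y : Equiv.Perm (Fin m)) : Prop :=
  Relation.ReflTransGen BruhatStep x y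

/-- The dual of the Bruhat order (restricted to fixed-point-free involutions,
this is the order `⪯` with minimum element `w₀`). -/
def DualLE {m : ℕ} (x y : Equiv.Perm (Fin m)) : Prop := BruhatLE y x

/-- Strict version of `DualLE`. -/
def DualLT {m : ℕ} (x y : Equiv.Perm (Fin m)) : Prop := BruhatLE y x ∧ x ≠ y

/-- for a fixed-point-free involution `u` and `r = (i,j)`, `i < j`,
`a = u i`, `b = u j`, `a < b`, `b ≠ i`: conjugating by `t = (i,b)` (resp.
`t = (j,a)`) produces an involution sending `i` to `j`, hence conjugation by
`t r` agrees with conjugation by `t`. -/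
theorem cases_three_four {n : ℕ} (u : Equiv.Perm (Fin (2 * n)))
    (hu : IsFpfInvolution u) (i j a b : Fin (2 * n)) (hij : i < j)
    (ha : u i = a) (hb : u j = b) (hab : a < b) (hbi : b ≠ i) :
    (((Equiv.swap i b)⁻¹ * u * Equiv.swap i b) i = j ∧
      (Equiv.swap i b * Equiv.swap i j)⁻¹ * u * (Equiv.swap i b * Equiv.swap i j) =
        (Equiv.swap i b)⁻¹ * u * Equiv.swap i b) ∧
    (((Equiv.swap j a)⁻¹ * u * Equiv.swap j a) i = j ∧
      (Equiv.swap j a * Equiv.swap i j)⁻¹ * u * (Equiv.swap j a * Equiv.swap i j) =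
        (Equiv.swap j a)⁻¹ * u * Equiv.swap j a) := by
  obtain ⟨hinv, hfpf⟩ := hu
  have huu : ∀ x, u (u x) = x := by
    intro x
    have := congrArg (fun p => p x) hinv
    simpa [Equiv.Perm.mul_apply] using this
  have hji : j ≠ i := ne_of_gt hij
  have hbj : b ≠ j := by rw [← hb]; exact hfpf j
  have hai : a ≠ i := by rw [← ha]; exact hfpf i
  have haj : a ≠ j := by
    intro h
    apply hbi
    rw [← hb, ← h, ← ha, huu]
  have hub : u b = j := by rw [← hb, huu]
  have hua : u a = i := by rw [← ha, huu]
  have key : ∀ t : Equiv.Perm (Fin (2 * n)),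
      (t⁻¹ * u * t) i = j →
      (t * Equiv.swap i j)⁻¹ * u * (t * Equiv.swap i j) = t⁻¹ * u * t := by
    intro t hv
    set v := t⁻¹ * u * t with hvdef
    have hvinv : ∀ x, v (v x) = x := by
      intro x
      simp [hvdef, Equiv.Perm.mul_apply, huu]
    have hvj : v j = i := by rw [← hv, hvinv]
    have : (t * Equiv.swap i j)⁻¹ * u * (t * Equiv.swap i j) =
        (Equiv.swap i j)⁻¹ * v * Equiv.swap i j := by
      simp [hvdef, mul_assoc, mul_inv_rev]
    rw [this]
    apply Equiv.ext
    intro x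
    simp only [Equiv.Perm.mul_apply, Equiv.swap_inv]
    rcases eq_or_ne x i with rfl | hx1
    · rw [Equiv.swap_apply_left, hvj, hv, Equiv.swap_apply_left]
    rcases eq_or_ne x j with rfl | hx2
    · rw [Equiv.swap_apply_right, hv, Equiv.swap_apply_right, hvj]
    rw [Equiv.swap_apply_of_ne_of_ne hx1 hx2]
    have h1 : v x ≠ i := fun h => hx2 (by rw [← hvinv x, h, hv])
    have h2 : v x ≠ j := fun h => hx1 (by rw [← hvinv x, h, hvj])
    rw [Equiv.swap_apply_of_ne_of_ne h1 h2]
  have c1 : ((Equiv.swap i b)⁻¹ * u * Equiv.swap i b) i = j := by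
    simp only [Equiv.Perm.mul_apply, Equiv.swap_inv, Equiv.swap_apply_left, hub]
    exact Equiv.swap_apply_of_ne_of_ne hji hbj.symm
  have c2 : ((Equiv.swap j a)⁻¹ * u * Equiv.swap j a) i = j := by
    simp only [Equiv.Perm.mul_apply, Equiv.swap_inv]
    rw [Equiv.swap_apply_of_ne_of_ne hji.symm hai.symm, ha, Equiv.swap_apply_right]
  exact ⟨⟨c1, key _ c1⟩, ⟨c2, key _ c2⟩⟩
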